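/- Fix δ ∈ (0,1), q ≥ 1, and A_min > 0. For a nonnegative integer K, the number of pairs (W, ω) is at most 72^{(1+1/(2δ))·L} · (72^{1+1/(2δ)}·q)^{(2/A_min)·K}, where W ⊆ V(Λ^L) is a vertex subset of an L×L triangular lattice torus (a graph on L² vertices of degree 6) such that W ∪ B is connected for some 'bridge set' B with |B| ≤ |W|/(2δ) + L and W ∪ B contains a fixed vertex v₀, |W| ≤ (2/A_min)·K, and ω : W → [q] is an arbitrary coloring of W. -/

import Mathlib

open scoped Classical

section Stmt8Helpers

set_option linter.unusedSectionVars false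

open SimpleGraph






open SimpleGraph

lemma exists_cross_edge {V : Type*} {G : SimpleGraph V} {a b : V} (p : G.Walk a b)
    (s : Set V) (ha : a ∈ s) (hb : b ∉ s) : ∃ u x, u ∈ s ∧ x ∉ s ∧ G.Adj u x := by
  induction p with
  | nil => exact absurd ha hb
  | @cons a c b h p ih =>
    by_cases hc : c ∈ s
    · exact ih hc hb
    · exact ⟨_, _, ha, hc, h⟩

/-- A connected finite graph has a closed spanning walk of even length at most
`2 * (card - 1)` from any vertex. -/
lemma exists_tour {V : Type*} [Fintype V] [DecidableEq V] {G : SimpleGraph V}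
    (hc : G.Preconnected) (v₀ : V) :
    ∃ p : G.Walk v₀ v₀, (∀ v, v ∈ p.support) ∧ Even p.length ∧
      p.length + 2 ≤ 2 * Fintype.card V := by
  suffices H : ∀ m (p : G.Walk v₀ v₀), (Finset.univ \ p.support.toFinset).card = m →
      Even p.length → p.length + 2 ≤ 2 * p.support.toFinset.card →
      ∃ p' : G.Walk v₀ v₀, (∀ v, v ∈ p'.support) ∧ Even p'.length ∧
        p'.length + 2 ≤ 2 * Fintype.card V by
    refine H _ Walk.nil rfl ?_ ?_ <;> simp
  intro m
  induction m with
  | zero =>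
    intro p hm he hlen
    refine ⟨p, fun v => ?_, he, ?_⟩
    · have : v ∈ p.support.toFinset := by
        by_contra hv
        have : v ∈ Finset.univ \ p.support.toFinset := by simp [hv]
        rw [Finset.card_eq_zero.mp hm] at this
        simp at this
      simpa using this
    · calc p.length + 2 ≤ 2 * p.support.toFinset.card := hlen
        _ ≤ 2 * Fintype.card V := by
          have := Finset.card_le_univ p.support.toFinset
          omega
  | succ m ih =>
    intro p hm he hlen
    obtain ⟨x, hx⟩ : ∃ x, x ∈ Finset.univ \ p.support.toFinset := by
      apply Finset.card_pos.mp; omega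
    have hxs : x ∉ p.support := by simpa using hx
    obtain ⟨w⟩ := hc v₀ x
    obtain ⟨u, y, hu, hy, hadj⟩ := exists_cross_edge w {v | v ∈ p.support}
      (p.start_mem_support) hxs
    have hu' : u ∈ p.support := hu
    set p' : G.Walk v₀ v₀ :=
      (p.takeUntil u hu').append (Walk.cons hadj (Walk.cons hadj.symm (p.dropUntil u hu'))) with hp'
    have hmem : ∀ v, v ∈ p'.support ↔ v ∈ p.support ∨ v = y := by
      intro v
      have hps : v ∈ p.support ↔ v ∈ (p.takeUntil u hu').support ∨ v ∈ (p.dropUntil u hu').support := by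
        conv_lhs => rw [← p.take_spec hu']
        exact Walk.mem_support_append_iff _ _
      constructor
      · intro hv
        rw [hp', Walk.mem_support_append_iff] at hv
        simp only [Walk.support_cons, List.mem_cons] at hv
        rcases hv with h | h | h | h
        · exact Or.inl (hps.mpr (Or.inl h))
        · subst h; exact Or.inl hu'
        · exact Or.inr h
        · exact Or.inl (hps.mpr (Or.inr h))
      · intro hv
        rw [hp', Walk.mem_support_append_iff]
        simp only [Walk.support_cons, List.mem_cons]
        rcases hv with hv | hv
        · rcases hps.mp hv with h | h
          · exact Or.inl h
          · exact Or.inr (Or.inr (Or.inr h))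
        · exact Or.inr (Or.inr (Or.inl hv))
    have hyp : y ∉ p.support := hy
    have hfin : p'.support.toFinset = insert y p.support.toFinset := by
      ext v; simp [hmem v, or_comm]
    have hlen' : p'.length = p.length + 2 := by
      have := congr_arg Walk.length (p.take_spec hu')
      rw [Walk.length_append] at this
      rw [hp', Walk.length_append]
      simp only [Walk.length_cons]
      omega
    have hcard' : p'.support.toFinset.card = p.support.toFinset.card + 1 := by
      rw [hfin, Finset.card_insert_of_notMem (by simpa using hyp)]
    refine ih p' ?_ ?_ ?_
    · rw [hfin]
      have heq : Finset.univ \ insert y p.support.toFinset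
          = (Finset.univ \ p.support.toFinset).erase y := by
        ext v; simp [and_comm]
      rw [heq, Finset.card_erase_of_mem (by simp [hyp]), hm]
      omega
    · rw [hlen']; exact he.add (by norm_num)
    · omega

/-- support as getVert of range -/
lemma support_eq_map_getVert {V : Type*} {G : SimpleGraph V} :
    ∀ {a b : V} (p : G.Walk a b), p.support = (List.range (p.length + 1)).map p.getVert := by
  intro a b p
  induction p with
  | nil => simp [Walk.getVert]
  | @cons a c b h p ih =>
    rw [Walk.support_cons, Walk.length_cons, ih]
    conv_rhs => rw [List.range_succ_eq_map]
    rw [List.map_cons, List.map_map]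
    rw [Walk.getVert_zero]
    congr 1


lemma exists_walk_for_W {V : Type*} [Fintype V] [DecidableEq V] (G : SimpleGraph V)
    (v₀ u₀ : V) (hadj : G.Adj v₀ u₀) (n : ℕ)
    (W S : Finset V) (hWS : W ⊆ S) (hv₀ : v₀ ∈ S)
    (hconn : (G.induce (S : Set V)).Connected)
    (hk : S.card ≤ n) :
    ∃ p : G.Walk v₀ v₀, p.length = 2 * n - 2 ∧ (∀ v ∈ W, v ∈ p.support) ∧
      p.support.toFinset.card ≤ n + 1 := by
  have hv₀' : v₀ ∈ (S : Set V) := by simpa using hv₀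
  obtain ⟨p₀, hall, heven, hlen⟩ := exists_tour hconn.preconnected ⟨v₀, hv₀'⟩
  have hcardS : Fintype.card (S : Set V) = S.card := by
    rw [Fintype.card_congr (Equiv.subtypeEquivRight (fun x => Finset.mem_coe))]
    exact Fintype.card_coe S
  -- map to G
  set emb : G.induce (S : Set V) ↪g G := SimpleGraph.Embedding.induce (S : Set V) with hemb
  set p₁ : G.Walk v₀ v₀ := p₀.map emb.toHom with hp₁
  have hlen₁ : p₁.length = p₀.length := Walk.length_map _ _
  have hmem₁ : ∀ v ∈ S, v ∈ p₁.support := by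
    intro v hv
    have : (⟨v, by simpa using hv⟩ : (S : Set V)) ∈ p₀.support := hall _
    rw [show p₁.support = p₀.support.map emb.toHom from Walk.support_map _ _]
    exact List.mem_map.mpr ⟨_, this, rfl⟩
  have hsub₁ : ∀ v ∈ p₁.support, v ∈ S := by
    intro v hv
    rw [show p₁.support = p₀.support.map emb.toHom from Walk.support_map _ _] at hv
    obtain ⟨x, _, rfl⟩ := List.mem_map.mp hv
    exact x.2
  -- padding
  have pad : ∀ t, ∃ p' : G.Walk v₀ v₀, p'.length = p₁.length + 2 * t ∧
      (∀ v, v ∈ p₁.support → v ∈ p'.support) ∧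
      (∀ v, v ∈ p'.support → v ∈ p₁.support ∨ v = u₀) := by
    intro t
    induction t with
    | zero => exact ⟨p₁, by omega, fun v h => h, fun v h => Or.inl h⟩
    | succ t ih =>
      obtain ⟨p', h1, h2, h3⟩ := ih
      refine ⟨Walk.cons hadj (Walk.cons hadj.symm p'), ?_, ?_, ?_⟩
      · simp only [Walk.length_cons]; omega
      · intro v hv
        simp only [Walk.support_cons, List.mem_cons]
        exact Or.inr (Or.inr (h2 v hv))
      · intro v hv
        simp only [Walk.support_cons, List.mem_cons] at hv
        rcases hv with rfl | rfl | hv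
        · exact Or.inl p₁.start_mem_support
        · exact Or.inr rfl
        · exact h3 v hv
  obtain ⟨r, hr⟩ := heven
  have hSn : 1 ≤ S.card := Finset.card_pos.mpr ⟨v₀, hv₀⟩
  have hrn : r + 1 ≤ n := by rw [hcardS] at hlen; omega
  obtain ⟨p', h1, h2, h3⟩ := pad (n - 1 - r)
  refine ⟨p', by omega, ?_, ?_⟩
  · intro v hv
    exact h2 v (hmem₁ v (hWS hv))
  · have hsub : p'.support.toFinset ⊆ insert u₀ S := by
      intro v hv
      rw [List.mem_toFinset] at hv
      rcases h3 v hv with h | rfl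
      · exact Finset.mem_insert_of_mem (hsub₁ v h)
      · exact Finset.mem_insert_self _ _
    calc p'.support.toFinset.card ≤ (insert u₀ S).card := Finset.card_le_card hsub
      _ ≤ S.card + 1 := Finset.card_insert_le _ _
      _ ≤ n + 1 := by omega


variable {V : Type*} [Fintype V] [DecidableEq V]

noncomputable def nbr (G : SimpleGraph V) [DecidableRel G.Adj]
    (hdeg : ∀ v, (G.neighborFinset v).card = 6) (v : V) :
    {x // x ∈ G.neighborFinset v} ≃ Fin 6 :=
  Fintype.equivFinOfCardEq (by rw [Fintype.card_coe]; exact hdeg v)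

noncomputable def codeOf (G : SimpleGraph V) [DecidableRel G.Adj]
    (hdeg : ∀ v, (G.neighborFinset v).card = 6) {v₀ : V} {ℓ : ℕ}
    (p : G.Walk v₀ v₀) (hl : p.length = ℓ) : Fin ℓ → Fin 6 :=
  fun i => nbr G hdeg (p.getVert i)
    ⟨p.getVert (i + 1), by
      rw [SimpleGraph.mem_neighborFinset]
      exact p.adj_getVert_succ (by omega)⟩

lemma getVert_eq_of_code_eq (G : SimpleGraph V) [DecidableRel G.Adj]
    (hdeg : ∀ v, (G.neighborFinset v).card = 6) {v₀ : V} {ℓ : ℕ}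
    (p₁ p₂ : G.Walk v₀ v₀) (h1 : p₁.length = ℓ) (h2 : p₂.length = ℓ)
    (hc : codeOf G hdeg p₁ h1 = codeOf G hdeg p₂ h2) :
    ∀ i, i ≤ ℓ → p₁.getVert i = p₂.getVert i := by
  intro i
  induction i with
  | zero => intro _; simp [Walk.getVert_zero]
  | succ i ih =>
    intro hi
    have hi' : i < ℓ := by omega
    have ihh := ih (by omega)
    have hci := congrFun hc ⟨i, hi'⟩
    simp only [codeOf] at hci
    have e1 : p₁.getVert (i + 1)
        = ((nbr G hdeg (p₁.getVert i)).symm (codeOf G hdeg p₁ h1 ⟨i, hi'⟩)).1 := by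
      simp only [codeOf, Equiv.symm_apply_apply]
    have e2 : p₂.getVert (i + 1)
        = ((nbr G hdeg (p₂.getVert i)).symm (codeOf G hdeg p₂ h2 ⟨i, hi'⟩)).1 := by
      simp only [codeOf, Equiv.symm_apply_apply]
    rw [e1, e2, hc, ihh]

lemma support_eq_of_code_eq (G : SimpleGraph V) [DecidableRel G.Adj]
    (hdeg : ∀ v, (G.neighborFinset v).card = 6) {v₀ : V} {ℓ : ℕ}
    (p₁ p₂ : G.Walk v₀ v₀) (h1 : p₁.length = ℓ) (h2 : p₂.length = ℓ)
    (hc : codeOf G hdeg p₁ h1 = codeOf G hdeg p₂ h2) :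
    p₁.support = p₂.support := by
  rw [support_eq_map_getVert p₁, support_eq_map_getVert p₂, h1, h2]
  refine List.map_congr_left fun i hi => ?_
  exact getVert_eq_of_code_eq G hdeg p₁ p₂ h1 h2 hc i (by
    have := List.mem_range.mp hi; omega)

lemma card_W_le (G : SimpleGraph V) [DecidableRel G.Adj]
    (hdeg : ∀ v, (G.neighborFinset v).card = 6) (v₀ : V) (n : ℕ)
    (P : Finset V → Prop)
    (hkey : ∀ W, P W → ∃ p : G.Walk v₀ v₀, p.length = 2 * n - 2 ∧
      (∀ v ∈ W, v ∈ p.support) ∧ p.support.toFinset.card ≤ n + 1) :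
    Nat.card {W : Finset V // P W} ≤ 6 ^ (2 * n - 2) * 2 ^ (n + 1) := by
  have hch : ∀ W : {W : Finset V // P W}, ∃ p : G.Walk v₀ v₀, p.length = 2 * n - 2 ∧
      (∀ v ∈ W.1, v ∈ p.support) ∧ p.support.toFinset.card ≤ n + 1 :=
    fun W => hkey W.1 W.2
  set pW : {W : Finset V // P W} → G.Walk v₀ v₀ := fun W => (hch W).choose with hpW
  have hlen : ∀ W, (pW W).length = 2 * n - 2 := fun W => (hch W).choose_spec.1
  have hWsup : ∀ W, ∀ v ∈ W.1, v ∈ (pW W).support := fun W => (hch W).choose_spec.2.1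
  have hdcard : ∀ W, (pW W).support.dedup.length ≤ n + 1 := by
    intro W
    have := (hch W).choose_spec.2.2
    rwa [List.card_toFinset] at this
  set mrk : {W : Finset V // P W} → Fin (n + 1) → Bool := fun W i =>
    if h : (i : ℕ) < (pW W).support.dedup.length then
      decide (((pW W).support.dedup)[(i : ℕ)]'h ∈ W.1) else false with hmrk
  set F : {W : Finset V // P W} → (Fin (2 * n - 2) → Fin 6) × (Fin (n + 1) → Bool) :=
    fun W => (codeOf G hdeg (pW W) (hlen W), mrk W) with hF
  -- characterization of membership
  have hchar : ∀ (W : {W : Finset V // P W}) (v : V), v ∈ W.1 ↔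
      ∃ (i : Fin (n + 1)) (h : (i : ℕ) < (pW W).support.dedup.length),
        ((pW W).support.dedup)[(i : ℕ)]'h = v ∧ mrk W i = true := by
    intro W v
    constructor
    · intro hv
      have hvs : v ∈ (pW W).support.dedup := List.mem_dedup.mpr (hWsup W v hv)
      obtain ⟨j, hj, hget⟩ := List.mem_iff_getElem.mp hvs
      refine ⟨⟨j, by have := hdcard W; omega⟩, hj, hget, ?_⟩
      simp only [hmrk, dif_pos hj, decide_eq_true_eq]
      rw [hget]; exact hv
    · rintro ⟨i, h, rfl, hm⟩
      simp only [hmrk, dif_pos h, decide_eq_true_eq] at hm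
      exact hm
  have hinj : Function.Injective F := by
    intro W₁ W₂ hFeq
    have hcode : codeOf G hdeg (pW W₁) (hlen W₁) = codeOf G hdeg (pW W₂) (hlen W₂) :=
      congrArg Prod.fst hFeq
    have hmr : mrk W₁ = mrk W₂ := congrArg Prod.snd hFeq
    have hsupp : (pW W₁).support = (pW W₂).support :=
      support_eq_of_code_eq G hdeg _ _ (hlen W₁) (hlen W₂) hcode
    have hded : (pW W₁).support.dedup = (pW W₂).support.dedup := by rw [hsupp]
    have habs : ∀ (l₁ l₂ : List V) (m₁ m₂ : Fin (n + 1) → Bool), l₁ = l₂ → m₁ = m₂ →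
        ∀ v : V, (∃ (i : Fin (n + 1)) (h : (i : ℕ) < l₁.length), l₁[(i : ℕ)]'h = v ∧ m₁ i = true) ↔
          (∃ (i : Fin (n + 1)) (h : (i : ℕ) < l₂.length), l₂[(i : ℕ)]'h = v ∧ m₂ i = true) := by
      rintro l₁ l₂ m₁ m₂ rfl rfl v
      rfl
    apply Subtype.ext
    ext v
    rw [hchar W₁ v, hchar W₂ v]
    exact habs _ _ _ _ hded hmr v
  calc Nat.card {W : Finset V // P W} = Fintype.card {W : Finset V // P W} :=
        Nat.card_eq_fintype_card
    _ ≤ Fintype.card ((Fin (2 * n - 2) → Fin 6) × (Fin (n + 1) → Bool)) :=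
        Fintype.card_le_of_injective F hinj
    _ = 6 ^ (2 * n - 2) * 2 ^ (n + 1) := by
        rw [Fintype.card_prod, Fintype.card_fun, Fintype.card_fun]
        simp


lemma pow_calc (m : ℕ) : 6 ^ (2 * (m + 1) - 2) * 2 ^ ((m + 1) + 1) ≤ 72 ^ (m + 1) := by
  have e1 : 2 * (m + 1) - 2 = 2 * m := by omega
  rw [e1]
  calc 6 ^ (2 * m) * 2 ^ (m + 1 + 1) = (6 ^ 2) ^ m * (2 ^ m * 4) := by
        rw [pow_mul]; ring
    _ = 72 ^ m * 4 := by rw [← mul_assoc, ← mul_pow]; norm_num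
    _ ≤ 72 ^ m * 72 := Nat.mul_le_mul_left (72 ^ m) (by norm_num)
    _ = 72 ^ (m + 1) := by ring





end Stmt8Helpers

/-- Counting bridged contour supports together with colorings: the number of pairs
`(W, ω)` with `W` bridgeable to a connected set through `v₀`, `|W| ≤ (2/A_min) K`,
and `ω : W → [q]`, is at most `72^{(1+1/(2δ))L} (72^{1+1/(2δ)} q)^{(2/A_min) K}`. -/
theorem stmt_8 {V : Type*} [Fintype V] [DecidableEq V]
    (G : SimpleGraph V) [DecidableRel G.Adj]
    (L : ℕ) (hL : 1 ≤ L) (hcard : Fintype.card V = L ^ 2)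
    (hdeg : ∀ v : V, (G.neighborFinset v).card = 6)
    (v₀ : V) (δ : ℝ) (hδ : 0 < δ) (hδ1 : δ < 1)
    (q : ℕ) (hq : 1 ≤ q) (Amin : ℝ) (hAmin : 0 < Amin) (K : ℕ) :
    (Nat.card (Σ W : {W : Finset V //
        (∃ B : Finset V, (G.induce (((W : Finset V) ∪ B : Finset V) : Set V)).Connected ∧
          (B.card : ℝ) ≤ ((W : Finset V).card : ℝ) / (2 * δ) + L ∧
          v₀ ∈ (W : Finset V) ∪ B) ∧
        (((W : Finset V).card : ℝ) ≤ 2 / Amin * K)},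
      ({v : V // v ∈ (W : Finset V)} → Fin q)) : ℝ) ≤
      (72 : ℝ) ^ ((1 + 1 / (2 * δ)) * L) *
        ((72 : ℝ) ^ (1 + 1 / (2 * δ)) * q) ^ (2 / Amin * K) := by
  set c : ℝ := 1 + 1 / (2 * δ) with hc
  set x : ℝ := 2 / Amin * K with hx
  have hc1 : (1 : ℝ) ≤ c := by
    rw [hc]
    have : 0 < 1 / (2 * δ) := by positivity
    linarith
  have hc0 : (0 : ℝ) ≤ c := by linarith
  have hx0 : (0 : ℝ) ≤ x := by positivity
  set n : ℕ := L + ⌊c * x⌋₊ with hn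
  set w : ℕ := ⌊x⌋₊ with hw
  set P : Finset V → Prop := fun W =>
    (∃ B : Finset V, (G.induce ((W ∪ B : Finset V) : Set V)).Connected ∧
      (B.card : ℝ) ≤ (W.card : ℝ) / (2 * δ) + L ∧ v₀ ∈ W ∪ B) ∧
    ((W.card : ℝ) ≤ 2 / Amin * K) with hP
  -- a neighbor of v₀
  obtain ⟨u₀, hu₀⟩ : ∃ u₀, u₀ ∈ G.neighborFinset v₀ := by
    apply Finset.card_pos.mp; rw [hdeg v₀]; norm_num
  have hadj : G.Adj v₀ u₀ := (SimpleGraph.mem_neighborFinset _ _ _).mp hu₀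
  -- the key walk existence
  have hkey : ∀ W, P W → ∃ p : G.Walk v₀ v₀, p.length = 2 * n - 2 ∧
      (∀ v ∈ W, v ∈ p.support) ∧ p.support.toFinset.card ≤ n + 1 := by
    intro W hPW
    obtain ⟨⟨B, hconn, hB, hv₀⟩, hWcard⟩ := hPW
    refine exists_walk_for_W G v₀ u₀ hadj n W (W ∪ B) Finset.subset_union_left hv₀ hconn ?_
    have h1 : ((W ∪ B).card : ℝ) ≤ (W.card : ℝ) + B.card := by
      exact_mod_cast Nat.cast_le.mpr (Finset.card_union_le W B)
    have h2 : ((W ∪ B).card : ℝ) ≤ c * (W.card : ℝ) + L := by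
      rw [hc]; rw [div_eq_mul_inv, mul_comm] at hB ⊢ <;> nlinarith [hB]
    have h3 : c * (W.card : ℝ) ≤ c * x := by
      apply mul_le_mul_of_nonneg_left _ hc0
      rw [hx]; exact hWcard
    have h4 : ((W ∪ B).card : ℝ) ≤ c * x + (L : ℕ) := by push_cast; linarith
    have h5 : (W ∪ B).card ≤ ⌊c * x + (L : ℕ)⌋₊ := Nat.le_floor h4
    rw [Nat.floor_add_natCast (by positivity) L] at h5
    omega
  -- counting
  have hsum : Nat.card (Σ W : {W : Finset V // P W},
      ({v : V // v ∈ (W : Finset V)} → Fin q)) = ∑ W : {W : Finset V // P W}, q ^ (W : Finset V).card := by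
    rw [Nat.card_eq_fintype_card, Fintype.card_sigma]
    apply Finset.sum_congr rfl
    intro W _
    rw [Fintype.card_fun, Fintype.card_fin, Fintype.card_coe]
  have hWw : ∀ W : {W : Finset V // P W}, (W : Finset V).card ≤ w := by
    intro W
    exact Nat.le_floor W.2.2
  have hcard72 : Nat.card {W : Finset V // P W} ≤ 72 ^ n := by
    refine le_trans (card_W_le G hdeg v₀ n P hkey) ?_
    obtain ⟨m, hm⟩ : ∃ m, n = m + 1 := ⟨n - 1, by omega⟩
    rw [hm]
    exact pow_calc m
  have hbound : Nat.card (Σ W : {W : Finset V // P W},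
      ({v : V // v ∈ (W : Finset V)} → Fin q)) ≤ 72 ^ n * q ^ w := by
    rw [hsum]
    calc ∑ W : {W : Finset V // P W}, q ^ (W : Finset V).card
        ≤ ∑ _W : {W : Finset V // P W}, q ^ w := by
          apply Finset.sum_le_sum
          intro W _
          exact Nat.pow_le_pow_right hq (hWw W)
      _ = Fintype.card {W : Finset V // P W} * q ^ w := by
          rw [Finset.sum_const, Finset.card_univ, smul_eq_mul]
      _ ≤ 72 ^ n * q ^ w := by
          apply Nat.mul_le_mul_right
          rw [← Nat.card_eq_fintype_card]
          exact hcard72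
  -- pass to the reals
  have hcast : (Nat.card (Σ W : {W : Finset V // P W},
      ({v : V // v ∈ (W : Finset V)} → Fin q)) : ℝ) ≤ (72 : ℝ) ^ (n : ℕ) * (q : ℝ) ^ (w : ℕ) := by
    exact_mod_cast Nat.cast_le.mpr hbound
  refine le_trans hcast ?_
  have hq1 : (1 : ℝ) ≤ (q : ℝ) := by exact_mod_cast hq
  have h72 : (1 : ℝ) ≤ 72 := by norm_num
  have hnR : (n : ℝ) ≤ c * L + c * x := by
    have h1 : ((⌊c * x⌋₊ : ℕ) : ℝ) ≤ c * x := Nat.floor_le (by positivity)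
    have h2 : (L : ℝ) ≤ c * L := le_mul_of_one_le_left (by positivity) hc1
    rw [hn]; push_cast; linarith
  have e1 : (72 : ℝ) ^ (n : ℕ) = (72 : ℝ) ^ ((n : ℕ) : ℝ) := (Real.rpow_natCast 72 n).symm
  have e2 : (q : ℝ) ^ (w : ℕ) = (q : ℝ) ^ ((w : ℕ) : ℝ) := (Real.rpow_natCast q w).symm
  have hle1 : (72 : ℝ) ^ ((n : ℕ) : ℝ) ≤ (72 : ℝ) ^ (c * L + c * x) :=
    Real.rpow_le_rpow_of_exponent_le h72 hnR
  have hle2 : (q : ℝ) ^ ((w : ℕ) : ℝ) ≤ (q : ℝ) ^ x := by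
    apply Real.rpow_le_rpow_of_exponent_le hq1
    exact Nat.floor_le hx0
  have hRHS : (72 : ℝ) ^ (c * L) * ((72 : ℝ) ^ c * q) ^ x
      = (72 : ℝ) ^ (c * L + c * x) * (q : ℝ) ^ x := by
    rw [Real.mul_rpow (by positivity) (by positivity),
      ← Real.rpow_mul (by norm_num : (0:ℝ) ≤ 72),
      Real.rpow_add (by norm_num : (0:ℝ) < 72)]
    ring
  calc (72 : ℝ) ^ (n : ℕ) * (q : ℝ) ^ (w : ℕ)
      = (72 : ℝ) ^ ((n : ℕ) : ℝ) * (q : ℝ) ^ ((w : ℕ) : ℝ) := by rw [e1, e2]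
    _ ≤ (72 : ℝ) ^ (c * L + c * x) * (q : ℝ) ^ x := by
        apply mul_le_mul hle1 hle2 (by positivity) (by positivity)
    _ = (72 : ℝ) ^ (c * L) * ((72 : ℝ) ^ c * q) ^ x := hRHS.symm
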